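/- Let L : M_d → M_d be the generator of a quantum dynamical semigroup of unital channels, and let P := span{X ∈ M_d : L(X) = iaX for some a ∈ ℝ}. Then P is a *-subalgebra of M_d: if X, Y ∈ P then XY ∈ P, and if X ∈ P then X* ∈ P. -/

import Mathlib

noncomputable section
open scoped Kronecker
open Filter Topology Matrix

/-- `M_d`, the algebra of `d × d` complex matrices. -/
abbrev Md (d : ℕ) := Matrix (Fin d) (Fin d) ℂ

/-- `Ad_U : X ↦ U* X U` for a unitary `U`. -/
def adU {d : ℕ} (U : Matrix.unitaryGroup (Fin d) ℂ) : Md d →ₗ[ℂ] Md d where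
  toFun X := (U : Md d)ᴴ * X * (U : Md d)
  map_add' X Y := by simp [Matrix.mul_add, Matrix.add_mul]
  map_smul' c X := by simp [Matrix.mul_smul, Matrix.smul_mul]

/-- A linear map is completely positive if it has a Kraus decomposition. -/
def IsCP {d : ℕ} (Φ : Md d →ₗ[ℂ] Md d) : Prop :=
  ∃ (n : ℕ) (V : Fin n → Md d), ∀ X, Φ X = ∑ j, (V j)ᴴ * X * (V j)

def IsUnital {d : ℕ} (Φ : Md d →ₗ[ℂ] Md d) : Prop := Φ 1 = 1

def IsTracePreserving {d : ℕ} (Φ : Md d →ₗ[ℂ] Md d) : Prop :=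
  ∀ X, (Φ X).trace = X.trace

def IsHermitianPreserving {d : ℕ} (Φ : Md d →ₗ[ℂ] Md d) : Prop :=
  ∀ X, Φ Xᴴ = (Φ X)ᴴ

/-- A unital quantum channel: CP, unital and trace-preserving. -/
def IsUnitalChannel {d : ℕ} (Φ : Md d →ₗ[ℂ] Md d) : Prop :=
  IsCP Φ ∧ IsUnital Φ ∧ IsTracePreserving Φ

/-- A mixed unitary channel: a convex combination of unitary conjugations. -/
def IsMixedUnitary {d : ℕ} (Φ : Md d →ₗ[ℂ] Md d) : Prop :=
  ∃ (ℓ : ℕ) (U : Fin ℓ → Matrix.unitaryGroup (Fin d) ℂ) (lam : Fin ℓ → ℝ),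
    (∀ j, 0 ≤ lam j) ∧ (∀ j, lam j ≤ 1) ∧ (∑ j, lam j = 1) ∧
    Φ = ∑ j, (lam j : ℂ) • adU (U j)

/-- The Choi matrix `J(Φ) = (1/d) ∑_{i,j} E_{ij} ⊗ Φ(E_{ij})`. -/
def choi {d : ℕ} (Φ : Md d →ₗ[ℂ] Md d) : Matrix (Fin d × Fin d) (Fin d × Fin d) ℂ :=
  (d : ℂ)⁻¹ • ∑ i : Fin d, ∑ j : Fin d,
    (Matrix.single i j (1 : ℂ)) ⊗ₖ Φ (Matrix.single i j (1 : ℂ))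

/-- `⟨Φ, Ψ⟩ = tr(J(Φ)* J(Ψ))`; this is a real number whenever `Φ, Ψ` are
Hermitian-preserving, so we record its real part. -/
def pairRe {d : ℕ} (Φ Ψ : Md d →ₗ[ℂ] Md d) : ℝ := (((choi Φ)ᴴ * choi Ψ).trace).re

/-- The Hilbert–Schmidt (Choi) norm `‖Φ‖₂ = tr(J(Φ)* J(Φ))^{1/2}`. -/
def hsNorm {d : ℕ} (Φ : Md d →ₗ[ℂ] Md d) : ℝ := Real.sqrt (pairRe Φ Φ)

attribute [local instance] Matrix.normedAddCommGroup Matrix.normedSpace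

/-- The exponential `e^{tL}` of a linear map `L` on `M_d`. -/
def expL {d : ℕ} (L : Md d →ₗ[ℂ] Md d) (t : ℝ) : Md d →ₗ[ℂ] Md d :=
  haveI : IsTopologicalRing (Md d →L[ℂ] Md d) :=
    @NonUnitalSeminormedRing.toIsTopologicalRing _ ContinuousLinearMap.toNormedRing.toNonUnitalNormedRing.toNonUnitalSeminormedRing
  ((NormedSpace.exp ((t : ℂ) • (LinearMap.toContinuousLinearMap L)) :
      Md d →L[ℂ] Md d)).toLinearMap

/-- `P = span{X : L X = i a X for some real a}`. -/
def periphGen {d : ℕ} (L : Md d →ₗ[ℂ] Md d) : Submodule ℂ (Md d) :=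
  Submodule.span ℂ {X : Md d | ∃ a : ℝ, L X = ((a : ℂ) * Complex.I) • X}


open scoped Nat

private instance instTopRingMd {d : ℕ} : IsTopologicalRing (Md d →L[ℂ] Md d) :=
  @NonUnitalSeminormedRing.toIsTopologicalRing _ ContinuousLinearMap.toNormedRing.toNonUnitalNormedRing.toNonUnitalSeminormedRing

private instance instNormedRingMd {d : ℕ} : NormedRing (Md d →L[ℂ] Md d) :=
  ContinuousLinearMap.toNormedRing

private instance instNormedAlgebraMd {d : ℕ} : NormedAlgebra ℂ (Md d →L[ℂ] Md d) :=
  ContinuousLinearMap.toNormedAlgebra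

private instance instCompleteSpaceMd {d : ℕ} :
    @CompleteSpace (Md d →L[ℂ] Md d) instNormedRingMd.toPseudoMetricSpace.toUniformSpace :=
  haveI : SequentialSpace (Md d) := inferInstanceAs (SequentialSpace (Fin d → Fin d → ℂ))
  ContinuousLinearMap.instCompleteSpace

private lemma lemA {d : ℕ} (A : Md d →L[ℂ] Md d) (x : Md d) (μ : ℂ) (h : A x = μ • x) (s : ℂ) :
    (NormedSpace.exp (s • A)) x = Complex.exp (s * μ) • x := by
  have hpow : ∀ n : ℕ, ((s • A) ^ n) x = (s * μ) ^ n • x := by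
    intro n
    induction n with
    | zero => simp
    | succ n ih =>
      rw [pow_succ', ContinuousLinearMap.mul_apply, ih]
      rw [ContinuousLinearMap.smul_apply, _root_.map_smul, h, smul_smul, smul_smul, pow_succ]
      ring_nf
  have hsum : Summable fun n : ℕ => ((n !⁻¹ : ℂ) • (s • A) ^ n) :=
    NormedSpace.expSeries_summable' (𝕂 := ℂ) (s • A)
  calc (NormedSpace.exp (s • A)) x
      = (∑' n : ℕ, (n !⁻¹ : ℂ) • (s • A) ^ n) x := by rw [NormedSpace.exp_eq_tsum ℂ]
    _ = ∑' n : ℕ, ((n !⁻¹ : ℂ) • (s • A) ^ n) x := by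
        exact ((ContinuousLinearMap.apply ℂ (Md d) x).map_tsum hsum)
    _ = ∑' n : ℕ, ((n !⁻¹ : ℂ) * (s * μ) ^ n) • x := by
        refine tsum_congr fun n => ?_
        rw [ContinuousLinearMap.smul_apply, hpow, smul_smul]
    _ = (∑' n : ℕ, (n !⁻¹ : ℂ) * (s * μ) ^ n) • x := by
        rw [Summable.tsum_smul_const]
        exact (NormedSpace.expSeries_summable' (𝕂 := ℂ) (s * μ)).congr (by simp [smul_eq_mul])
    _ = Complex.exp (s * μ) • x := by
        rw [Complex.exp_eq_exp_ℂ, NormedSpace.exp_eq_tsum ℂ]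
        simp [smul_eq_mul]

private def posReals : Set ℂ := Complex.ofReal '' Set.Ici (0:ℝ)

private lemma udwa : UniqueDiffWithinAt ℂ posReals 0 := by
  have hmul : ∀ n : ℕ, ((n:ℂ)+1) • (((n+1:ℝ)⁻¹ : ℝ) : ℂ) = 1 := by
    intro n
    rw [smul_eq_mul]
    push_cast
    exact mul_inv_cancel₀ (Nat.cast_add_one_ne_zero n)
  constructor
  · have h1 : (1:ℂ) ∈ tangentConeAt ℂ posReals 0 := by
      refine mem_tangentConeAt_of_seq atTop (fun n : ℕ => (n+1 : ℂ)) (fun n => (((n+1:ℝ)⁻¹ : ℝ) : ℂ)) ?_ ?_ ?_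
      · have h0 := (Complex.continuous_ofReal.tendsto 0).comp tendsto_one_div_add_atTop_nhds_zero_nat
        simpa [Function.comp_def] using h0
      · filter_upwards with n
        refine ⟨(n+1:ℝ)⁻¹, ?_, by rw [zero_add]⟩
        rw [Set.mem_Ici]
        positivity
      · simp only [hmul]
        exact tendsto_const_nhds
    have hspan : Submodule.span ℂ (tangentConeAt ℂ posReals 0) = ⊤ := by
      rw [eq_top_iff]
      intro z _
      have : z = z • (1:ℂ) := by simp
      rw [this]
      exact Submodule.smul_mem _ z (Submodule.subset_span h1)
    rw [hspan]
    simp only [Submodule.top_coe]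
    exact dense_univ
  · exact subset_closure ⟨0, by simp, by simp⟩

private lemma lemB {d : ℕ} (L : Md d →ₗ[ℂ] Md d) (Z : Md d) (c : ℂ)
    (hZ : ∀ t : ℝ, 0 ≤ t → expL L t Z = Complex.exp (c * t) • Z) : L Z = c • Z := by
  set A := LinearMap.toContinuousLinearMap L with hA
  have h3 : (NormedSpace.exp ((0:ℂ) • A)) = 1 := by rw [zero_smul ℂ A, NormedSpace.exp_zero]
  have hf : HasDerivAt (fun s : ℂ => (NormedSpace.exp (s • A)) Z) (A Z) 0 := by
    have h1 : HasDerivAt (fun s : ℂ => NormedSpace.exp (s • A))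
        (NormedSpace.exp ((0:ℂ) • A) * A) 0 := hasDerivAt_exp_smul_const A (0:ℂ)
    have h2 := h1.clm_apply (hasDerivAt_const (0:ℂ) Z)
    simp [h3] at h2
    exact h2.congr_deriv (add_zero _)
  have hg : HasDerivAt (fun s : ℂ => Complex.exp (c * s) • Z) (c • Z) 0 := by
    have h1 : HasDerivAt (fun s : ℂ => c * s) c 0 := by
      simpa using (hasDerivAt_id (0:ℂ)).const_mul c
    have h2 := h1.cexp.smul_const Z
    simp only [mul_zero, Complex.exp_zero, one_mul] at h2
    exact h2
  have heq : Set.EqOn (fun s : ℂ => Complex.exp (c * s) • Z)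
      (fun s : ℂ => (NormedSpace.exp (s • A)) Z) posReals := by
    rintro z ⟨t, ht, rfl⟩
    exact (hZ t ht).symm
  have hgw : HasDerivWithinAt (fun s : ℂ => (NormedSpace.exp (s • A)) Z) (c • Z) posReals 0 := by
    refine (hg.hasDerivWithinAt).congr heq.symm ?_
    rw [h3]; simp
  have := udwa.eq_deriv posReals (hf.hasDerivWithinAt) hgw
  simpa [hA] using this

private lemma key {d : ℕ} {Φ : Md d →ₗ[ℂ] Md d} (hΦ : IsUnitalChannel Φ)
    (X Y : Md d) (u v : ℂ) (hu : u * (starRingEnd ℂ) u = 1)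
    (hX : Φ X = u • X) (hY : Φ Y = v • Y) :
    Φ (X * Y) = (u * v) • (X * Y) := by
  obtain ⟨⟨n, V, hV⟩, hunit, htp⟩ := hΦ
  have hsum1 : ∑ j, (V j)ᴴ * V j = 1 := by
    have h1 := hV 1
    rw [hunit] at h1
    simpa [Matrix.mul_one] using h1.symm
  -- Hermitian preservation
  have hXH : Φ Xᴴ = (starRingEnd ℂ) u • Xᴴ := by
    have h2 : Φ Xᴴ = (Φ X)ᴴ := by
      rw [hV X, hV Xᴴ, Matrix.conjTranspose_sum]
      refine Finset.sum_congr rfl fun j _ => ?_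
      simp [Matrix.conjTranspose_mul, Matrix.mul_assoc]
    rw [h2, hX, Matrix.conjTranspose_smul]
    rfl
  set R : Fin n → Md d := fun j => Xᴴ * V j - (starRingEnd ℂ) u • (V j * Xᴴ) with hR
  have hterm : ∀ j, (R j)ᴴ * R j =
      (V j)ᴴ * (X * Xᴴ) * V j
      - (starRingEnd ℂ) u • (((V j)ᴴ * X * V j) * Xᴴ)
      - u • (X * ((V j)ᴴ * Xᴴ * V j))
      + (u * (starRingEnd ℂ) u) • (X * ((V j)ᴴ * V j) * Xᴴ) := by
    intro j
    simp only [hR, Matrix.conjTranspose_sub, Matrix.conjTranspose_smul, Matrix.conjTranspose_mul,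
      Matrix.conjTranspose_conjTranspose, starRingEnd_apply, star_star,
      Matrix.sub_mul, Matrix.mul_sub, Matrix.smul_mul, Matrix.mul_smul, smul_smul, smul_sub,
      Matrix.mul_assoc, mul_comm]
    abel
  have hD : ∑ x : Fin n, X * ((V x)ᴴ * V x) * Xᴴ = X * Xᴴ := by
    rw [← Finset.sum_mul, ← Finset.mul_sum, hsum1, Matrix.mul_one]
  have hsumR : ∑ j, (R j)ᴴ * R j = Φ (X * Xᴴ) - X * Xᴴ := by
    rw [Finset.sum_congr rfl fun j _ => hterm j]
    rw [Finset.sum_add_distrib, Finset.sum_sub_distrib, Finset.sum_sub_distrib,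
      ← Finset.smul_sum, ← Finset.smul_sum, ← Finset.smul_sum,
      ← Finset.sum_mul, ← Finset.mul_sum]
    rw [hD, ← hV (X * Xᴴ), ← hV X, ← hV Xᴴ, hX, hXH]
    rw [hu]
    simp only [one_smul, Matrix.smul_mul, Matrix.mul_smul, smul_smul]
    rw [mul_comm ((starRingEnd ℂ) u) u, hu]
    simp only [one_smul]
    abel
  -- trace of the PSD sum vanishes
  have htr : (∑ j, (R j)ᴴ * R j).trace = 0 := by
    rw [hsumR, Matrix.trace_sub, htp (X * Xᴴ), sub_self]
  have htrj : ∀ B : Md d, (Bᴴ * B).trace = ∑ i, ∑ k, ((Complex.normSq (B k i) : ℝ) : ℂ) := by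
    intro B
    rw [Matrix.trace]
    refine Finset.sum_congr rfl fun i _ => ?_
    rw [Matrix.diag_apply, Matrix.mul_apply]
    refine Finset.sum_congr rfl fun k _ => ?_
    rw [Matrix.conjTranspose_apply, Complex.normSq_eq_conj_mul_self]
    rfl
  -- each R j is zero
  have hRzero : ∀ j, R j = 0 := by
    have hsum0 : ∑ j, ∑ i, ∑ k, Complex.normSq (R j k i) = 0 := by
      have : ((∑ j, ∑ i, ∑ k, Complex.normSq (R j k i) : ℝ) : ℂ) = 0 := by
        push_cast
        rw [← htr, Matrix.trace_sum]
        rw [Finset.sum_congr rfl fun j _ => htrj (R j)]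
      exact_mod_cast this
    have hnn : ∀ j ∈ Finset.univ (α := Fin n), (0:ℝ) ≤ ∑ i, ∑ k, Complex.normSq (R j k i) :=
      fun j _ => Finset.sum_nonneg fun i _ => Finset.sum_nonneg fun k _ => Complex.normSq_nonneg _
    intro j
    have hj := (Finset.sum_eq_zero_iff_of_nonneg hnn).mp hsum0 j (Finset.mem_univ j)
    ext k i
    have hnn2 : ∀ i ∈ Finset.univ (α := Fin d), (0:ℝ) ≤ ∑ k, Complex.normSq (R j k i) :=
      fun i _ => Finset.sum_nonneg fun k _ => Complex.normSq_nonneg _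
    have hji := (Finset.sum_eq_zero_iff_of_nonneg hnn2).mp hj i (Finset.mem_univ i)
    have hnn3 : ∀ k ∈ Finset.univ (α := Fin d), (0:ℝ) ≤ Complex.normSq (R j k i) :=
      fun k _ => Complex.normSq_nonneg _
    have := (Finset.sum_eq_zero_iff_of_nonneg hnn3).mp hji k (Finset.mem_univ k)
    simpa [Complex.normSq_eq_zero] using this
  -- the commutation relation
  have hcomm : ∀ j, (V j)ᴴ * X = u • (X * (V j)ᴴ) := by
    intro j
    have h0 : Xᴴ * V j = (starRingEnd ℂ) u • (V j * Xᴴ) := by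
      have := hRzero j
      rw [hR] at this
      simpa [sub_eq_zero] using this
    have hct := congrArg Matrix.conjTranspose h0
    rw [Matrix.conjTranspose_mul, Matrix.conjTranspose_smul, Matrix.conjTranspose_mul,
      Matrix.conjTranspose_conjTranspose] at hct
    rw [hct]
    congr 1
    exact star_star u
  -- conclude
  rw [hV (X * Y)]
  have hstep : ∀ j, (V j)ᴴ * (X * Y) * V j = u • (X * ((V j)ᴴ * Y * V j)) := by
    intro j
    rw [← Matrix.mul_assoc, ← Matrix.mul_assoc, hcomm j,
      Matrix.smul_mul, Matrix.smul_mul]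
    simp only [Matrix.mul_assoc]
  rw [Finset.sum_congr rfl fun j _ => hstep j, ← Finset.smul_sum, ← Finset.mul_sum]
  have hsum2 : ∑ j, (V j)ᴴ * Y * V j = Φ Y := (hV Y).symm
  rw [hsum2, hY, Matrix.mul_smul, smul_smul]

private lemma hermPres {d : ℕ} {Φ : Md d →ₗ[ℂ] Md d} (hΦ : IsCP Φ) (X : Md d) :
    Φ Xᴴ = (Φ X)ᴴ := by
  obtain ⟨n, V, hV⟩ := hΦ
  rw [hV X, hV Xᴴ, Matrix.conjTranspose_sum]
  refine Finset.sum_congr rfl fun j _ => ?_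
  simp [Matrix.conjTranspose_mul, Matrix.mul_assoc]

private lemma expL_eigen {d : ℕ} (L : Md d →ₗ[ℂ] Md d) (x : Md d) (μ : ℂ)
    (h : L x = μ • x) (t : ℝ) : expL L t x = Complex.exp ((t : ℂ) * μ) • x :=
  lemA (LinearMap.toContinuousLinearMap L) x μ h (t : ℂ)

private lemma unit_conj (z : ℂ) (hz : (starRingEnd ℂ) z = -z) :
    Complex.exp z * (starRingEnd ℂ) (Complex.exp z) = 1 := by
  rw [← Complex.exp_conj, hz, ← Complex.exp_add, add_neg_cancel, Complex.exp_zero]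

theorem stmt_7' (d : ℕ) (L : Md d →ₗ[ℂ] Md d)
    (h : ∀ t : ℝ, 0 ≤ t → IsUnitalChannel (expL L t)) :
    (∀ X ∈ periphGen L, ∀ Y ∈ periphGen L, X * Y ∈ periphGen L) ∧
    (∀ X ∈ periphGen L, Xᴴ ∈ periphGen L) := by
  set S : Set (Md d) := {X : Md d | ∃ a : ℝ, L X = ((a : ℂ) * Complex.I) • X} with hSdef
  have hconj : ∀ (a : ℝ) (t : ℝ),
      (starRingEnd ℂ) ((t : ℂ) * ((a : ℂ) * Complex.I)) = -((t : ℂ) * ((a : ℂ) * Complex.I)) := by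
    intro a t
    simp only [_root_.map_mul, Complex.conj_ofReal, Complex.conj_I]
    ring
  -- products of generators are generators
  have hmulS : ∀ X ∈ S, ∀ Y ∈ S, X * Y ∈ S := by
    rintro X ⟨a, ha⟩ Y ⟨b, hb⟩
    refine ⟨a + b, ?_⟩
    have hc : (((a + b : ℝ) : ℂ) * Complex.I) • (X * Y)
        = ((((a:ℝ) + b : ℝ) : ℂ) * Complex.I) • (X * Y) := rfl
    refine lemB L (X * Y) (((a + b : ℝ) : ℂ) * Complex.I) ?_
    intro t ht
    have hXt : expL L t X = Complex.exp ((t : ℂ) * ((a : ℂ) * Complex.I)) • X :=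
      expL_eigen L X _ ha t
    have hYt : expL L t Y = Complex.exp ((t : ℂ) * ((b : ℂ) * Complex.I)) • Y :=
      expL_eigen L Y _ hb t
    have hu := unit_conj _ (hconj a t)
    have hkey := key (h t ht) X Y _ _ hu hXt hYt
    rw [hkey, ← Complex.exp_add]
    congr 2
    push_cast
    ring
  -- conjugate transposes of generators are generators
  have hstarS : ∀ X ∈ S, Xᴴ ∈ S := by
    rintro X ⟨a, ha⟩
    refine ⟨-a, ?_⟩
    refine lemB L Xᴴ (((-a : ℝ) : ℂ) * Complex.I) ?_
    intro t ht
    have hXt : expL L t X = Complex.exp ((t : ℂ) * ((a : ℂ) * Complex.I)) • X :=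
      expL_eigen L X _ ha t
    have hherm := hermPres (h t ht).1 X
    rw [hherm, hXt, Matrix.conjTranspose_smul]
    have : (star (Complex.exp ((t : ℂ) * ((a : ℂ) * Complex.I))) : ℂ)
        = Complex.exp (((-a : ℝ) : ℂ) * Complex.I * (t : ℂ)) := by
      rw [show (star (Complex.exp ((t : ℂ) * ((a : ℂ) * Complex.I))) : ℂ)
          = (starRingEnd ℂ) (Complex.exp ((t : ℂ) * ((a : ℂ) * Complex.I))) from rfl,
        ← Complex.exp_conj, hconj a t]
      congr 1
      push_cast
      ring
    rw [this]
  constructor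
  · intro X hX
    refine Submodule.span_induction
      (p := fun X _ => ∀ Y ∈ periphGen L, X * Y ∈ periphGen L) ?_ ?_ ?_ ?_ hX
    · intro x hxS Y hY
      refine Submodule.span_induction (p := fun Y _ => x * Y ∈ periphGen L) ?_ ?_ ?_ ?_ hY
      · intro y hyS
        exact Submodule.subset_span (hmulS x hxS y hyS)
      · show x * (0 : Md d) ∈ periphGen L
        rw [mul_zero]; exact zero_mem _
      · intro y z _ _ hy hz
        show x * (y + z) ∈ periphGen L
        rw [mul_add]; exact add_mem hy hz
      · intro c y _ hy
        show x * (c • y) ∈ periphGen L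
        rw [mul_smul_comm]; exact Submodule.smul_mem _ c hy
    · intro Y _
      show (0 : Md d) * Y ∈ periphGen L
      rw [zero_mul]; exact zero_mem _
    · intro x z _ _ hx hz Y hY
      show (x + z) * Y ∈ periphGen L
      rw [add_mul]; exact add_mem (hx Y hY) (hz Y hY)
    · intro c x _ hx Y hY
      show (c • x) * Y ∈ periphGen L
      rw [smul_mul_assoc]; exact Submodule.smul_mem _ c (hx Y hY)
  · intro X hX
    refine Submodule.span_induction (p := fun X _ => Xᴴ ∈ periphGen L) ?_ ?_ ?_ ?_ hX
    · intro x hxS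
      exact Submodule.subset_span (hstarS x hxS)
    · show (0 : Md d)ᴴ ∈ periphGen L
      rw [Matrix.conjTranspose_zero]; exact zero_mem _
    · intro x y _ _ hx hy
      show (x + y)ᴴ ∈ periphGen L
      rw [Matrix.conjTranspose_add]; exact add_mem hx hy
    · intro c x _ hx
      show (c • x)ᴴ ∈ periphGen L
      rw [Matrix.conjTranspose_smul]; exact Submodule.smul_mem _ _ hx

/-- for the generator `L` of a quantum dynamical semigroup of unital
channels, the span of the purely-imaginary eigenvectors is a *-subalgebra. -/
theorem stmt_7 (d : ℕ) (L : Md d →ₗ[ℂ] Md d)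
    (h : ∀ t : ℝ, 0 ≤ t → IsUnitalChannel (expL L t)) :
    (∀ X ∈ periphGen L, ∀ Y ∈ periphGen L, X * Y ∈ periphGen L) ∧
    (∀ X ∈ periphGen L, Xᴴ ∈ periphGen L) :=
  stmt_7' d L h
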